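/- Let G be a finite simple graph, let K be a 5-vertex clique of G, and let e be an edge of K. Define the edge-gadget ψ_{K,e} on triangles T of G by: ψ_{K,e}(T) = 1/3 if T is contained in K and |V(T) ∩ e| ∈ {0,2}; ψ_{K,e}(T) = −1/6 if T is contained in K and |V(T) ∩ e| = 1; and ψ_{K,e}(T) = 0 if T is not contained in K. Then for every edge f of G, the sum of ψ_{K,e}(T) over all triangles T of G containing f equals 1 if f = e, and equals 0 otherwise. -/
import Mathlib


/-- The edge-gadget `ψ_{K,e}` for the edge `e = {x,y}` of a `5`-clique `K`:
it assigns `1/3` to triangles `T ⊆ K` with `|V(T) ∩ e| ∈ {0,2}`, `-1/6` to triangles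
`T ⊆ K` with `|V(T) ∩ e| = 1`, and `0` to triangles not contained in `K`. -/
noncomputable def edgeGadget {V : Type*} [DecidableEq V] (K : Finset V) (x y : V)
    (T : Finset V) : ℝ :=
  if T ⊆ K ∧ ((T ∩ ({x, y} : Finset V)).card = 0 ∨ (T ∩ ({x, y} : Finset V)).card = 2)
    then 1 / 3
  else if T ⊆ K ∧ (T ∩ ({x, y} : Finset V)).card = 1 then -(1 / 6)
  else 0

/-- For a `5`-clique `K` of `G`, an edge `e = {x,y}` of `K`, and any
edge `f = {u,v}` of `G`, the sum of `ψ_{K,e}(T)` over all triangles `T` of `G`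
containing `f` equals `1` if `f = e` and `0` otherwise. -/
private lemma inter_card_three {V : Type*} [DecidableEq V] (u v w : V) (S : Finset V)
    (huv : u ≠ v) (huw : u ≠ w) (hvw : v ≠ w) :
    (({u, v, w} : Finset V) ∩ S).card =
      (if u ∈ S then 1 else 0) + ((if v ∈ S then 1 else 0) + (if w ∈ S then 1 else 0)) := by
  rw [← Finset.filter_mem_eq_inter, Finset.card_filter]
  rw [Finset.sum_insert (by simp [huv, huw]), Finset.sum_insert (by simp [hvw]),
    Finset.sum_singleton]

theorem edgeGadget_sum {V : Type*} [Fintype V] [DecidableEq V]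
    (G : SimpleGraph V) [DecidableRel G.Adj]
    (K : Finset V) (hK : G.IsNClique 5 K)
    (x y : V) (hx : x ∈ K) (hy : y ∈ K) (hxy : x ≠ y)
    (u v : V) (huv : G.Adj u v) :
    ∑ T ∈ (G.cliqueFinset 3).filter (fun T => u ∈ T ∧ v ∈ T), edgeGadget K x y T
      = if ({u, v} : Finset V) = ({x, y} : Finset V) then 1 else 0 := by
  by_cases hmem : u ∈ K ∧ v ∈ K
  case neg =>
    have hne' : ({u, v} : Finset V) ≠ ({x, y} : Finset V) := by
      intro h
      apply hmem
      have hu : u ∈ ({x, y} : Finset V) := h ▸ (by simp)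
      have hv : v ∈ ({x, y} : Finset V) := h ▸ (by simp)
      simp only [Finset.mem_insert, Finset.mem_singleton] at hu hv
      constructor
      · rcases hu with rfl | rfl <;> assumption
      · rcases hv with rfl | rfl <;> assumption
    rw [if_neg hne']
    apply Finset.sum_eq_zero
    intro T hT
    simp only [Finset.mem_filter] at hT
    obtain ⟨_, huT, hvT⟩ := hT
    have hnot : ¬ T ⊆ K := fun h => hmem ⟨h huT, h hvT⟩
    simp [edgeGadget, hnot]
  case pos =>
    obtain ⟨hu, hv⟩ := hmem
    have hne : u ≠ v := huv.ne
    have hsub : ({u, v} : Finset V) ⊆ K := by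
      intro z hz
      simp only [Finset.mem_insert, Finset.mem_singleton] at hz
      rcases hz with rfl | rfl <;> assumption
    set W := K \ ({u, v} : Finset V) with hWdef
    -- reduce to sum over W
    have hinj : ∀ p ∈ W, ∀ q ∈ W, ({u, v, p} : Finset V) = ({u, v, q} : Finset V) → p = q := by
      intro p hp q hq hpq
      have hq' : q ∈ ({u, v, p} : Finset V) := by rw [hpq]; simp
      simp only [Finset.mem_insert, Finset.mem_singleton] at hq'
      obtain ⟨-, hq2⟩ := Finset.mem_sdiff.mp hq
      simp only [Finset.mem_insert, Finset.mem_singleton, not_or] at hq2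
      rcases hq' with rfl | rfl | rfl
      · exact absurd rfl hq2.1
      · exact absurd rfl hq2.2
      · rfl
    have hstep : ∑ T ∈ (G.cliqueFinset 3).filter (fun T => u ∈ T ∧ v ∈ T),
        edgeGadget K x y T = ∑ w ∈ W, edgeGadget K x y {u, v, w} := by
      rw [← Finset.sum_image (f := edgeGadget K x y) hinj]
      apply (Finset.sum_subset _ _).symm
      · intro T hT
        simp only [Finset.mem_image] at hT
        obtain ⟨w, hw, rfl⟩ := hT
        obtain ⟨hwK, hw'⟩ := Finset.mem_sdiff.mp hw
        simp only [Finset.mem_insert, Finset.mem_singleton, not_or] at hw'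
        obtain ⟨hwu, hwv⟩ := hw'
        simp only [Finset.mem_filter, SimpleGraph.mem_cliqueFinset_iff]
        refine ⟨?_, by simp, by simp⟩
        rw [SimpleGraph.is3Clique_triple_iff]
        exact ⟨huv, hK.isClique hu hwK (Ne.symm hwu), hK.isClique hv hwK (Ne.symm hwv)⟩
      · intro T hT hT'
        simp only [Finset.mem_filter, SimpleGraph.mem_cliqueFinset_iff] at hT
        obtain ⟨hTc, huT, hvT⟩ := hT
        have hnot : ¬ T ⊆ K := by
          intro hTK
          apply hT'
          have hsubT : ({u, v} : Finset V) ⊆ T := by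
            intro z hz
            simp only [Finset.mem_insert, Finset.mem_singleton] at hz
            rcases hz with rfl | rfl <;> assumption
          have hcard : (T \ ({u, v} : Finset V)).card = 1 := by
            rw [Finset.card_sdiff_of_subset hsubT, hTc.card_eq,
              Finset.card_insert_of_notMem (by simp [hne]), Finset.card_singleton]
          obtain ⟨w, hw⟩ := Finset.card_eq_one.mp hcard
          have hTeq : T = {u, v, w} := by
            have := Finset.union_sdiff_of_subset hsubT
            rw [hw] at this
            rw [← this]
            ext z
            simp [or_assoc]
          refine Finset.mem_image.mpr ⟨w, ?_, hTeq.symm⟩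
          have hwT : w ∈ T \ ({u, v} : Finset V) := hw ▸ Finset.mem_singleton_self w
          obtain ⟨hwT', hw'⟩ := Finset.mem_sdiff.mp hwT
          exact Finset.mem_sdiff.mpr ⟨hTK hwT', hw'⟩
        simp [edgeGadget, hnot]
    rw [hstep]
    -- W has three elements
    have hWcard : W.card = 3 := by
      rw [hWdef, Finset.card_sdiff_of_subset hsub, hK.card_eq,
        Finset.card_insert_of_notMem (by simp [hne]), Finset.card_singleton]
    obtain ⟨a, b, c, hab, hac, hbc, hW⟩ := Finset.card_eq_three.mp hWcard
    have haW : a ∈ W := hW ▸ (by simp)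
    have hbW : b ∈ W := hW ▸ (by simp)
    have hcW : c ∈ W := hW ▸ (by simp)
    have haK := (Finset.mem_sdiff.mp haW).1
    have hbK := (Finset.mem_sdiff.mp hbW).1
    have hcK := (Finset.mem_sdiff.mp hcW).1
    have hau : a ≠ u := by have := (Finset.mem_sdiff.mp haW).2; simp at this; tauto
    have hav : a ≠ v := by have := (Finset.mem_sdiff.mp haW).2; simp at this; tauto
    have hbu : b ≠ u := by have := (Finset.mem_sdiff.mp hbW).2; simp at this; tauto
    have hbv : b ≠ v := by have := (Finset.mem_sdiff.mp hbW).2; simp at this; tauto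
    have hcu : c ≠ u := by have := (Finset.mem_sdiff.mp hcW).2; simp at this; tauto
    have hcv : c ≠ v := by have := (Finset.mem_sdiff.mp hcW).2; simp at this; tauto
    rw [hW, Finset.sum_insert (by simp [hab, hac]), Finset.sum_insert (by simp [hbc]),
      Finset.sum_singleton]
    -- evaluate the gadget on {u,v,w}
    have hg : ∀ w : V, w ∈ K → w ≠ u → w ≠ v →
        edgeGadget K x y {u, v, w} =
          (fun n : ℕ => if n = 0 ∨ n = 2 then (1 : ℝ) / 3 else if n = 1 then -(1 / 6) else 0)
            ((if u ∈ ({x, y} : Finset V) then 1 else 0) +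
              ((if v ∈ ({x, y} : Finset V) then 1 else 0) +
                (if w ∈ ({x, y} : Finset V) then 1 else 0))) := by
      intro w hwK hwu hwv
      have hTK : ({u, v, w} : Finset V) ⊆ K := by
        intro z hz
        simp only [Finset.mem_insert, Finset.mem_singleton] at hz
        rcases hz with rfl | rfl | rfl <;> assumption
      rw [edgeGadget, inter_card_three u v w _ hne (Ne.symm hwu) (Ne.symm hwv)]
      simp only [hTK, true_and]
    rw [hg a haK hau hav, hg b hbK hbu hbv, hg c hcK hcu hcv]
    -- the membership count constraint
    have hsum : (if u ∈ ({x, y} : Finset V) then 1 else 0) +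
        ((if v ∈ ({x, y} : Finset V) then 1 else 0) +
          ((if a ∈ ({x, y} : Finset V) then 1 else 0) +
            ((if b ∈ ({x, y} : Finset V) then 1 else 0) +
              (if c ∈ ({x, y} : Finset V) then 1 else 0)))) = 2 := by
      have hKeq : K = insert u (insert v ({a, b, c} : Finset V)) := by
        have : ({u, v} : Finset V) ∪ W = K := Finset.union_sdiff_of_subset hsub
        rw [hW] at this
        rw [← this]
        ext z
        simp only [Finset.mem_union, Finset.mem_insert, Finset.mem_singleton]
        tauto
      have h2 : (K ∩ ({x, y} : Finset V)).card = 2 := by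
        rw [Finset.inter_eq_right.mpr (by
          intro z hz
          simp only [Finset.mem_insert, Finset.mem_singleton] at hz
          rcases hz with rfl | rfl <;> assumption)]
        rw [Finset.card_insert_of_notMem (by simp [hxy]), Finset.card_singleton]
      rw [← h2, ← Finset.filter_mem_eq_inter, Finset.card_filter, hKeq]
      rw [Finset.sum_insert (by simp [hne, Ne.symm hau, Ne.symm hbu, Ne.symm hcu]),
        Finset.sum_insert (by simp [Ne.symm hav, Ne.symm hbv, Ne.symm hcv]),
        Finset.sum_insert (by simp [hab, hac]), Finset.sum_insert (by simp [hbc]),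
        Finset.sum_singleton]
    -- rewrite the RHS condition
    have hcond : (({u, v} : Finset V) = ({x, y} : Finset V)) ↔
        (u ∈ ({x, y} : Finset V) ∧ v ∈ ({x, y} : Finset V)) := by
      constructor
      · intro h; exact ⟨h ▸ (by simp), h ▸ (by simp)⟩
      · rintro ⟨h1, h2⟩
        apply Finset.eq_of_subset_of_card_le
        · intro z hz
          simp only [Finset.mem_insert, Finset.mem_singleton] at hz
          rcases hz with rfl | rfl <;> assumption
        · rw [Finset.card_insert_of_notMem (by simp [hxy]),
            Finset.card_insert_of_notMem (by simp [hne]),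
            Finset.card_singleton, Finset.card_singleton]
    rw [if_congr hcond rfl rfl]
    by_cases h1 : u ∈ ({x, y} : Finset V) <;>
      by_cases h2 : v ∈ ({x, y} : Finset V) <;>
      by_cases h3 : a ∈ ({x, y} : Finset V) <;>
      by_cases h4 : b ∈ ({x, y} : Finset V) <;>
      by_cases h5 : c ∈ ({x, y} : Finset V) <;>
      simp only [h1, h2, h3, h4, h5, if_true, if_false] at hsum ⊢ <;>
      first
        | omega
        | norm_num
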